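/- Let G be a group with a normal subgroup D such that every subgroup of D is normal in G, let H ≤ G with H = ⟨h, H∩D⟩ for some h ∈ H, and set N = H∩D (which is normal in G). Then the index |N_D(H) : H∩D| equals the order of the centralizer C_{D/N}(hN) in the quotient group G/N. -/

import Mathlib

/-- Let `D ⊴ G` with every subgroup of `D` normal in `G`, and `H = ⟨h⟩ ⊔ (H ⊓ D)`.
Then `|N_D(H) : H ⊓ D|` equals the order of the centralizer of the image of `h`
inside the image of `D` in `G/(H ⊓ D)`. -/
theorem normalizer_index_eq_centralizer_card
    {G : Type*} [Group G] (D : Subgroup G) [D.Normal]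
    (hall : ∀ K : Subgroup G, K ≤ D → K.Normal)
    (H : Subgroup G) (h : G) (hh : h ∈ H)
    (hgen : H = Subgroup.closure {h} ⊔ (H ⊓ D))
    [(H ⊓ D).Normal] :
    (H ⊓ D).relIndex (Subgroup.normalizer (H : Set G) ⊓ D) =
      Nat.card ↥(Subgroup.centralizer {QuotientGroup.mk' (H ⊓ D) h} ⊓
        D.map (QuotientGroup.mk' (H ⊓ D))) := by
  set N := H ⊓ D with hN
  set π := QuotientGroup.mk' N with hπ
  have hker : π.ker = N := QuotientGroup.ker_mk' N
  have hNnorm : N.Normal := ‹_›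
  -- membership in N from commuting in the quotient
  have mem_of_comm : ∀ d : G, π h * π d = π d * π h → d * h * d⁻¹ * h⁻¹ ∈ N := by
    intro d hcomm
    rw [← hker, MonoidHom.mem_ker]
    have : π (d * h * d⁻¹ * h⁻¹) = π d * π h * (π d)⁻¹ * (π h)⁻¹ := by
      simp [map_mul, map_inv]
    rw [this, ← hcomm]
    group
  have comm_of_mem : ∀ d : G, d * h * d⁻¹ * h⁻¹ ∈ N → π h * π d = π d * π h := by
    intro d hd
    have h1 : π (d * h * d⁻¹ * h⁻¹) = 1 := by rw [← MonoidHom.mem_ker, hker]; exact hd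
    have h2 : π d * π h * (π d)⁻¹ * (π h)⁻¹ = 1 := by
      rw [← h1]; simp [map_mul, map_inv]
    have h3 : π d * π h * (π d)⁻¹ = π h := mul_inv_eq_one.mp h2
    conv_lhs => rw [← h3]
    group
  -- conjugation by commuting elements of D preserves H
  have conj_h : ∀ d : G, d ∈ D → π h * π d = π d * π h → ∀ g ∈ H, d * g * d⁻¹ ∈ H := by
    intro d hdD hcomm g hg
    have hc : d * h * d⁻¹ * h⁻¹ ∈ N := mem_of_comm d hcomm
    have hconjh : d * h * d⁻¹ ∈ H := by
      have : d * h * d⁻¹ = (d * h * d⁻¹ * h⁻¹) * h := by group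
      rw [this]
      exact H.mul_mem (hc.1) hh
    have hmap : H.map (MulAut.conj d).toMonoidHom ≤ H := by
      conv_lhs => rw [hgen]
      rw [Subgroup.map_sup]
      apply sup_le
      · rw [MonoidHom.map_closure]
        apply Subgroup.closure_le _ |>.mpr
        intro x hx
        simp only [Set.image_singleton, Set.mem_singleton_iff] at hx
        subst hx
        simpa [MulAut.conj] using hconjh
      · intro x hx
        rcases hx with ⟨y, hy, rfl⟩
        have : d * y * d⁻¹ ∈ N := hNnorm.conj_mem y hy d
        exact (le_trans inf_le_left le_rfl : N ≤ H) (by simpa [MulAut.conj] using this)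
    have : (MulAut.conj d).toMonoidHom g ∈ H := hmap ⟨g, hg, rfl⟩
    simpa [MulAut.conj] using this
  have key : ∀ d : G, d ∈ D → (π h * π d = π d * π h ↔ d ∈ Subgroup.normalizer (H : Set G)) := by
    intro d hdD
    constructor
    · intro hcomm
      have hcomm' : π h * π d⁻¹ = π d⁻¹ * π h := by
        have := hcomm
        simp only [map_inv]
        calc π h * (π d)⁻¹ = (π d)⁻¹ * (π d * π h * (π d)⁻¹) := by group
          _ = (π d)⁻¹ * (π h * π d * (π d)⁻¹) := by rw [← hcomm]
          _ = (π d)⁻¹ * π h := by group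
      rw [Subgroup.mem_normalizer_iff]
      intro g
      constructor
      · exact fun hg => conj_h d hdD hcomm g hg
      · intro hg
        have := conj_h d⁻¹ (D.inv_mem hdD) hcomm' _ hg
        simpa [mul_assoc] using this
    · intro hdn
      apply comm_of_mem
      constructor
      · have : d * h * d⁻¹ ∈ H := (Subgroup.mem_normalizer_iff.mp hdn h).mp hh
        exact H.mul_mem this (H.inv_mem hh)
      · have : h * d⁻¹ * h⁻¹ ∈ D := by
          simpa [mul_assoc] using ‹D.Normal›.conj_mem d⁻¹ (D.inv_mem hdD) h
        simpa [mul_assoc] using D.mul_mem hdD this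
  -- the image of the normalizer-in-D is the centralizer-in-image-of-D
  have himg : (Subgroup.normalizer (H : Set G) ⊓ D).map π =
      Subgroup.centralizer {π h} ⊓ D.map π := by
    ext x
    simp only [Subgroup.mem_inf, Subgroup.mem_map]
    constructor
    · rintro ⟨d, ⟨hdn, hdD⟩, rfl⟩
      refine ⟨?_, ⟨d, hdD, rfl⟩⟩
      rw [Subgroup.mem_centralizer_iff]
      intro g hg
      simp only [Set.mem_singleton_iff] at hg
      subst hg
      exact (key d hdD).mpr hdn
    · rintro ⟨hc, d, hdD, rfl⟩
      have hcomm : π h * π d = π d * π h :=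
        Subgroup.mem_centralizer_iff.mp hc (π h) rfl
      exact ⟨d, ⟨(key d hdD).mp hcomm, hdD⟩, rfl⟩
  -- relindex equals the cardinality of the image
  set K := Subgroup.normalizer (H : Set G) ⊓ D with hK
  have hNK : N ≤ K := by
    apply le_inf
    · exact le_trans inf_le_left Subgroup.le_normalizer
    · exact inf_le_right
  have : N.relIndex K = Nat.card (K.map π) := by
    have h4 := Subgroup.relIndex_ker (K := K) π
    rwa [hker] at h4
  rw [this, himg]
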